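/- arXiv:2208.04410 — 8 statements merged into one kernel-verified Lean document; each statement's English description precedes it below -/
import Mathlib

section
/- Fix ε ∈ (0, 1/10) and consider the three destinations A = −1−ε, B = 1, C = 2 on the real line, with a traveler starting at the origin 0. Among the six possible visiting orders of {A, B, C}, the order (A, B, C) is the unique minimizer of ℓ₁² + ℓ₂² + ℓ₃² (the squared Euclidean norm of the visit-time vector), while the order (B, C, A) is the unique minimizer of ℓ₁ + ℓ₂ + ℓ₃ (the L1 norm of the visit-time vector). In particular, the optimal routes for the L2 and L1 objectives differ. -/
/-- The vector of visit times of a route on the real line that starts at the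
origin `0` and visits the points `v 0, v 1, v 2` in order at unit speed. -/
def visitTimes (v : Fin 3 → ℝ) : Fin 3 → ℝ :=
  ![|v 0|, |v 0| + |v 1 - v 0|, |v 0| + |v 1 - v 0| + |v 2 - v 1|]

/-- The squared Euclidean (L2) cost of a route: `ℓ₁² + ℓ₂² + ℓ₃²`. -/
def costL2sq (v : Fin 3 → ℝ) : ℝ := ∑ i, (visitTimes v i) ^ 2

/-- The L1 cost of a route: `ℓ₁ + ℓ₂ + ℓ₃`. -/
def costL1 (v : Fin 3 → ℝ) : ℝ := ∑ i, visitTimes v i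

/-- For destinations `A = -1-ε`, `B = 1`, `C = 2` with `ε ∈ (0, 1/10)` and a
traveler starting at the origin, the order `(A, B, C)` (the identity
permutation of the points) is the unique minimizer of the squared L2 cost
among the six visiting orders, while `(B, C, A)` (the rotation permutation)
is the unique minimizer of the L1 cost; in particular the two optimal routes
differ. -/
theorem l2_and_l1_optima_differ
    (ε : ℝ) (hε : ε ∈ Set.Ioo (0 : ℝ) (1 / 10))
    (pts : Fin 3 → ℝ) (hpts : pts = ![-1 - ε, 1, 2]) :
    (∀ σ : Equiv.Perm (Fin 3), σ ≠ Equiv.refl (Fin 3) →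
      costL2sq (pts ∘ Equiv.refl (Fin 3)) < costL2sq (pts ∘ σ)) ∧
    (∀ σ : Equiv.Perm (Fin 3), σ ≠ finRotate 3 →
      costL1 (pts ∘ finRotate 3) < costL1 (pts ∘ σ)) ∧
    (Equiv.refl (Fin 3) ≠ finRotate 3) := by
  obtain ⟨h0, h1⟩ := hε
  have ha : |(-1 - ε : ℝ)| = 1 + ε := by rw [abs_of_neg (by linarith)]; ring
  have hb : |(1 : ℝ) - (-1 - ε)| = 2 + ε := by rw [abs_of_pos (by linarith)]; ring
  have hc : |(2 : ℝ) - 1| = 1 := by norm_num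
  have hd : |(-1 - ε : ℝ) - 1| = 2 + ε := by rw [abs_of_neg (by linarith)]; ring
  have he : |(2 : ℝ) - (-1 - ε)| = 3 + ε := by rw [abs_of_pos (by linarith)]; ring
  have hf : |(1 : ℝ) - 2| = 1 := by norm_num
  have hg : |(-1 - ε : ℝ) - 2| = 3 + ε := by rw [abs_of_neg (by linarith)]; ring
  refine ⟨?_, ?_, by decide⟩
  · intro σ hσ
    obtain rfl | rfl | rfl | rfl | rfl | rfl := (by decide : ∀ τ : Equiv.Perm (Fin 3),
      τ = 1 ∨ τ = Equiv.swap 1 2 ∨ τ = Equiv.swap 0 1 ∨ τ = Equiv.swap 0 1 * Equiv.swap 1 2 ∨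
        τ = Equiv.swap 0 2 ∨ τ = Equiv.swap 0 2 * Equiv.swap 1 2) σ <;>
      simp_all [costL2sq, visitTimes, Fin.sum_univ_three, Equiv.swap_apply_def,
        Fin.isValue] <;>
      first
        | exact absurd (by decide) hσ
        | nlinarith [sq_nonneg ε, sq_nonneg (1 - ε)]
  · intro σ hσ
    obtain rfl | rfl | rfl | rfl | rfl | rfl := (by decide : ∀ τ : Equiv.Perm (Fin 3),
      τ = 1 ∨ τ = Equiv.swap 1 2 ∨ τ = Equiv.swap 0 1 ∨ τ = Equiv.swap 0 1 * Equiv.swap 1 2 ∨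
        τ = Equiv.swap 0 2 ∨ τ = Equiv.swap 0 2 * Equiv.swap 1 2) σ <;>
      simp_all [costL1, visitTimes, Fin.sum_univ_three, Equiv.swap_apply_def,
        Fin.isValue] <;>
      first
        | exact absurd (by decide) hσ
        | nlinarith [sq_nonneg ε, sq_nonneg (1 - ε)]
end

section
/- Let b = 1001/1000 and n = 2100. Then (2·b^n − 1)/(b^n + 1) ≥ 1.67, and (1 + 2n + b^{n+1}/(b−1) − n − 1) / (b^{n+1}/(b−1) − n − 1 + 2·b^n − 1) ≥ 1.67. -/
/-- Numerical bounds for the All-Norm TSP lower-bound instance on the line: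
for `b = 1001/1000` and `n = 2100`, both the L∞ ratio `(2b^n − 1)/(b^n + 1)`
and the L1 ratio `(1 + 2n + b^{n+1}/(b−1) − n − 1)/(b^{n+1}/(b−1) − n − 1 +
2b^n − 1)` are at least `1.67`. -/
theorem allNorm_lower_bound_ratios :
    let b : ℝ := 1001 / 1000
    let n : ℕ := 2100
    (2 * b ^ n - 1) / (b ^ n + 1) ≥ 1.67 ∧
    (1 + 2 * (n : ℝ) + b ^ (n + 1) / (b - 1) - (n : ℝ) - 1) /
        (b ^ (n + 1) / (b - 1) - (n : ℝ) - 1 + 2 * b ^ n - 1) ≥ 1.67 := by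
  intro b n
  have h1 : (1001/1000:ℝ)^2100 ≥ 8.1 := by
    have hx : (1105/1000:ℝ) ≤ (1001/1000:ℝ)^100 := by norm_num
    have := pow_le_pow_left₀ (by norm_num) hx 21
    rw [← pow_mul] at this; exact le_trans (by norm_num) this
  have h2 : (1001/1000:ℝ)^2100 ≤ 8.2 := by
    have hx : (1001/1000:ℝ)^100 ≤ 11052/10000 := by norm_num
    have := pow_le_pow_left₀ (by positivity) hx 21
    rw [← pow_mul] at this; exact le_trans this (by norm_num)
  have hbn : b ^ n = (1001/1000:ℝ)^2100 := rfl
  have hbn1 : b ^ (n + 1) = (1001/1000:ℝ)^2100 * (1001/1000) := pow_succ _ _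
  have hb1 : b - 1 = 1/1000 := by norm_num [b]
  constructor
  · rw [ge_iff_le, le_div_iff₀ (by rw [hbn]; generalize (1001/1000:ℝ)^2100 = X at *; linarith)]
    rw [hbn]; generalize (1001/1000:ℝ)^2100 = X at *; linarith
  · rw [ge_iff_le, le_div_iff₀ (by rw [hbn1, hbn, hb1]; push_cast; generalize (1001/1000:ℝ)^2100 = X at *; nlinarith)]
    rw [hbn1, hbn, hb1]; push_cast; generalize (1001/1000:ℝ)^2100 = X at *; nlinarith
end

section
/- For every real number p ≥ 1 and every x ∈ [0, 1], one has (1 + 3x)^p ≤ 1 + (3p)^p · x. -/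
open Real Set

private lemma log_three_le : Real.log 3 ≤ 1.2 := by
  rw [Real.log_le_iff_le_exp (by norm_num)]
  have h1 : (2.7182818283 : ℝ) < Real.exp 1 := Real.exp_one_gt_d9
  have h2 : (1.2 : ℝ) ≤ Real.exp 0.2 := by
    have := Real.add_one_le_exp (0.2 : ℝ); linarith
  have : Real.exp (1.2 : ℝ) = Real.exp 1 * Real.exp 0.2 := by
    rw [← Real.exp_add]; norm_num
  nlinarith [Real.exp_pos (0.2 : ℝ)]

private lemma log_43_le : Real.log (4/3) ≤ 1/3 := by
  have := Real.log_le_sub_one_of_pos (x := (4/3 : ℝ)) (by norm_num)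
  linarith

private lemma key_small (p : ℝ) (hp : 1 ≤ p) (hp2 : p ≤ 2) :
    (4:ℝ) ^ p - 1 ≤ (3 * p) ^ p := by
  set c : ℝ := Real.log (4/3) with hc
  set d : ℝ := Real.log 3 with hd
  have hcpos : 0 < c := Real.log_pos (by norm_num)
  have hdpos : 0 < d := Real.log_pos (by norm_num)
  set g : ℝ → ℝ := fun q => 1 + q * Real.log q - Real.exp (q * c) + Real.exp (-(q * d)) with hg
  -- g is monotone on [1,2]
  have hderiv : ∀ q ∈ interior (Icc (1:ℝ) 2), HasDerivAt g
      ((Real.log q + 1) - c * Real.exp (q * c) - d * Real.exp (-(q * d))) q := by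
    intro q hq
    rw [interior_Icc] at hq
    have hq0 : 0 < q := by linarith [hq.1]
    have h1 : HasDerivAt (fun q : ℝ => q * Real.log q) (Real.log q + 1) q := by
      have := (Real.hasDerivAt_log (ne_of_gt hq0)).const_mul q |>.add
        ((hasDerivAt_id q).mul_const (Real.log q))
      exact ((hasDerivAt_id q).mul (Real.hasDerivAt_log (ne_of_gt hq0))).congr_deriv
        (by simp [mul_inv_cancel₀ (ne_of_gt hq0)])
    have h2 : HasDerivAt (fun q : ℝ => Real.exp (q * c)) (c * Real.exp (q * c)) q := by
      simpa [mul_comm] using (((hasDerivAt_id q).mul_const c).exp)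
    have h3 : HasDerivAt (fun q : ℝ => Real.exp (-(q * d))) (-d * Real.exp (-(q * d))) q := by
      simpa [mul_comm] using ((((hasDerivAt_id q).mul_const d).neg).exp)
    have := ((h1.const_add 1).sub h2).add h3
    exact this.congr_deriv (by ring)
  have hmono : MonotoneOn g (Icc (1:ℝ) 2) := by
    apply monotoneOn_of_deriv_nonneg (convex_Icc 1 2)
    · have hlog : ContinuousOn (fun q : ℝ => q * Real.log q) (Icc (1:ℝ) 2) :=
        continuousOn_id.mul (Real.continuousOn_log.mono (fun r hr => by
          simp only [Set.mem_compl_iff, Set.mem_singleton_iff]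
          intro h; rw [h] at hr; exact absurd hr.1 (by norm_num)))
      exact ((continuousOn_const.add hlog).sub
        ((Real.continuous_exp.comp (continuous_id.mul continuous_const)).continuousOn)).add
        ((Real.continuous_exp.comp (continuous_id.mul continuous_const).neg).continuousOn)
    · intro q hq
      exact (hderiv q hq).differentiableAt.differentiableWithinAt
    · intro q hq
      rw [(hderiv q hq).deriv]
      rw [interior_Icc] at hq
      have hq1 : 1 < q := hq.1
      have hq2 : q < 2 := hq.2
      have hlogq : 0 ≤ Real.log q := Real.log_nonneg (by linarith)
      have hb1 : Real.exp (q * c) ≤ 16/9 := by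
        calc Real.exp (q * c) ≤ Real.exp (2 * c) := by
              apply Real.exp_le_exp.2; nlinarith
          _ = (4/3 : ℝ)^(2:ℕ) := by
              rw [two_mul, Real.exp_add, Real.exp_log (by norm_num)]; norm_num
          _ = 16/9 := by norm_num
      have hb2 : Real.exp (-(q * d)) ≤ 1/3 := by
        calc Real.exp (-(q * d)) ≤ Real.exp (-(1 * d)) := by
              apply Real.exp_le_exp.2; nlinarith
          _ = 1/3 := by
              rw [one_mul, Real.exp_neg, Real.exp_log (by norm_num)]; norm_num
      have hcle : c ≤ 1/3 := log_43_le
      have hdle : d ≤ 1.2 := log_three_le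
      nlinarith [Real.exp_pos (q * c), Real.exp_pos (-(q * d))]
  have hg1 : g 1 = 0 := by
    simp only [hg, one_mul, Real.log_one, mul_zero]
    rw [Real.exp_log (by norm_num : (0:ℝ) < 4/3), Real.exp_neg, Real.exp_log (by norm_num : (0:ℝ) < 3)]
    norm_num
  have hgp : 0 ≤ g p := by
    have := hmono (left_mem_Icc.2 (by norm_num)) ⟨hp, hp2⟩ hp
    rw [hg1] at this; exact this
  -- translate
  have hp0 : 0 < p := by linarith
  have h3p : (0:ℝ) < 3^p := Real.rpow_pos_of_pos (by norm_num) p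
  have e1 : Real.exp (p * c) = (4/3 : ℝ)^p := by
    rw [hc, Real.rpow_def_of_pos (by norm_num : (0:ℝ) < 4/3)]; ring_nf
  have e2 : Real.exp (-(p * d)) = ((3:ℝ)^p)⁻¹ := by
    rw [hd, Real.exp_neg, Real.rpow_def_of_pos (by norm_num : (0:ℝ) < 3)]; ring_nf
  have e3 : (3:ℝ)^p * (4/3:ℝ)^p = 4^p := by
    rw [← Real.mul_rpow (by norm_num) (by norm_num)]; norm_num
  have e4 : (3*p:ℝ)^p = 3^p * p^p := Real.mul_rpow (by norm_num) hp0.le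
  have e5 : (1 : ℝ) + p * Real.log p ≤ p ^ p := by
    rw [Real.rpow_def_of_pos hp0]
    have := Real.add_one_le_exp (Real.log p * p)
    nlinarith
  simp only [hg] at hgp
  rw [e1, e2] at hgp
  rw [e4]
  have key : 4^p - 1 ≤ 3^p * (1 + p * Real.log p) := by
    have : (3:ℝ)^p * ((4/3:ℝ)^p - ((3:ℝ)^p)⁻¹) ≤ 3^p * (1 + p * Real.log p) := by
      apply mul_le_mul_of_nonneg_left _ h3p.le
      linarith
    rw [mul_sub, e3, mul_inv_cancel₀ (ne_of_gt h3p)] at this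
    exact this
  calc (4:ℝ)^p - 1 ≤ 3^p * (1 + p * Real.log p) := key
    _ ≤ 3^p * p^p := mul_le_mul_of_nonneg_left e5 h3p.le

private lemma key (p : ℝ) (hp : 1 ≤ p) : (4:ℝ) ^ p - 1 ≤ (3 * p) ^ p := by
  rcases le_or_gt p 2 with h2 | h2
  · exact key_small p hp h2
  · have : (4:ℝ)^p ≤ (3*p)^p :=
      Real.rpow_le_rpow (by norm_num) (by linarith) (by linarith)
    linarith

/-- Pointwise estimate used in the reduction of `L_p` TSP to Segmented TSP:
for `p ≥ 1` and `x ∈ [0, 1]`, `(1 + 3x)^p ≤ 1 + (3p)^p · x`. -/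
theorem one_add_three_mul_rpow_le
    (p x : ℝ) (hp : 1 ≤ p) (hx : x ∈ Set.Icc (0 : ℝ) 1) :
    (1 + 3 * x) ^ p ≤ 1 + (3 * p) ^ p * x := by
  obtain ⟨hx0, hx1⟩ := hx
  have hconv := convexOn_rpow hp
  have h := hconv.2 (show (1:ℝ) ∈ Set.Ici (0:ℝ) by norm_num)
    (show (4:ℝ) ∈ Set.Ici (0:ℝ) by norm_num)
    (show (0:ℝ) ≤ 1 - x by linarith) hx0 (by ring)
  simp only [smul_eq_mul, Real.one_rpow] at h
  have h14 : (1 - x) * 1 + x * 4 = 1 + 3 * x := by ring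
  rw [h14] at h
  have hkey := key p hp
  nlinarith [Real.rpow_nonneg (by norm_num : (0:ℝ) ≤ 4) p]
end

section
/- Let p ≥ 1 be a real number, let ε > 0, and let k be a positive integer with k ≥ (3p)^p·(1+ε)/ε². Then (1/k) · ∑_{j=0}^{k−1} (1 + 3·(1+ε)^{−j})^p ≤ 1 + ε. -/
-- log 3 ≥ 1.0931471803
lemma log_three_ge : (1.0931471803:ℝ) ≤ Real.log 3 := by
  have h15 : Real.exp 0.4 ≤ 1.5 := by
    have h5 : Real.exp 0.4 ^ 5 = Real.exp 2 := by
      rw [← Real.exp_nat_mul]; norm_num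
    have he : Real.exp 2 ≤ 7.59375 := by
      have h2 : Real.exp 2 = Real.exp 1 * Real.exp 1 := by
        rw [← Real.exp_add]; norm_num
      have := Real.exp_one_lt_d9
      nlinarith [Real.exp_pos 1]
    have h55 : Real.exp 0.4 ^ 5 ≤ 1.5 ^ 5 := by
      rw [h5]; norm_num; linarith
    exact le_of_pow_le_pow_left₀ (by norm_num) (by norm_num) h55
  have hlog15 : (0.4:ℝ) ≤ Real.log 1.5 :=
    (Real.le_log_iff_exp_le (by norm_num)).2 h15
  have h3 : Real.log 3 = Real.log 2 + Real.log 1.5 := by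
    rw [← Real.log_mul (by norm_num) (by norm_num)]; norm_num
  have := Real.log_two_gt_d9
  rw [h3]; linarith

lemma key_poly (s a b : ℝ) (hs0 : 0 ≤ s) (hs1 : s ≤ 1/3)
    (ha0 : 0 ≤ a) (ha : a ≤ 0.6931471808) (hb : 1.0931471803 ≤ b) :
    4 * (1 + s * (2 * a) + 3/4 * (s * (2 * a))^2) ≤ 3 * (1 + s) * (1 + s * b / 2)^2 + 1 := by
  have ha2 : a^2 ≤ 0.4804530477 := by nlinarith
  have hb2 : (1.19497:ℝ) ≤ b^2 := by nlinarith
  have e1 : s * a ≤ s * 0.6931471808 := mul_le_mul_of_nonneg_left ha hs0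
  have e2 : s^2 * a^2 ≤ s^2 * 0.4804530477 := mul_le_mul_of_nonneg_left ha2 (sq_nonneg s)
  have e3 : s * 1.0931471803 ≤ s * b := mul_le_mul_of_nonneg_left hb hs0
  have e4 : s^2 * 1.0931471803 ≤ s^2 * b := mul_le_mul_of_nonneg_left hb (sq_nonneg s)
  have e5 : s^2 * 1.19497 ≤ s^2 * b^2 := mul_le_mul_of_nonneg_left hb2 (sq_nonneg s)
  have e6 : s^2 ≤ s * (1/3) := by nlinarith
  have e7 : (0:ℝ) ≤ s^3 * b^2 := by positivity
  nlinarith [e1, e2, e3, e4, e5, e6, e7]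

lemma four_rpow_le {p : ℝ} (hp : 1 ≤ p) : (4:ℝ) ^ p ≤ (3*p) ^ p + 1 := by
  rcases le_or_gt (4/3 : ℝ) p with h | h
  · have h4 : (4:ℝ) ^ p ≤ (3*p) ^ p :=
      Real.rpow_le_rpow (by norm_num) (by linarith) (by linarith)
    linarith
  · set s := p - 1 with hs
    have hs0 : 0 ≤ s := by simp [hs]; linarith
    have hs1 : s ≤ 1/3 := by simp [hs]; linarith
    have hL4 : Real.log 4 = 2 * Real.log 2 := by
      rw [show (4:ℝ) = 2^2 by norm_num, Real.log_pow]; norm_num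
    have hL2a := Real.log_two_lt_d9
    have hL2b := Real.log_two_gt_d9
    have hL3 := log_three_ge
    -- 4^p = 4 * exp (s * log 4)
    have h4p : (4:ℝ) ^ p = 4 * Real.exp (s * (2 * Real.log 2)) := by
      rw [show p = 1 + s by rw [hs]; ring, Real.rpow_add (by norm_num), Real.rpow_one,
        Real.rpow_def_of_pos (by norm_num), hL4]; ring_nf
    -- upper bound via exp_bound'
    have hx0 : 0 ≤ s * (2 * Real.log 2) := by positivity
    have hx1 : s * (2 * Real.log 2) ≤ 1 := by nlinarith
    have hub : Real.exp (s * (2 * Real.log 2)) ≤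
        1 + s * (2 * Real.log 2) + 3/4 * (s * (2 * Real.log 2))^2 := by
      have := Real.exp_bound' hx0 hx1 (n := 2) (by norm_num)
      simp [Finset.sum_range_succ, Nat.factorial] at this
      nlinarith [this]
    -- lower bound for (3p)^p
    have h3p0 : (0:ℝ) < 3 * p := by linarith
    have h3pp : (3*p) ^ p = (3*p) * (3*p) ^ s := by
      have hps : (1:ℝ) + s = p := by rw [hs]; ring
      nth_rewrite 2 [← hps]
      rw [Real.rpow_add h3p0, Real.rpow_one]
    have h3s : (3:ℝ) ^ s ≤ (3*p) ^ s :=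
      Real.rpow_le_rpow (by norm_num) (by linarith) hs0
    have h3exp : (3:ℝ) ^ s = Real.exp (s * Real.log 3) := by
      rw [Real.rpow_def_of_pos (by norm_num)]; ring_nf
    have hlb : (1 + s * Real.log 3 / 2)^2 ≤ Real.exp (s * Real.log 3) := by
      have : Real.exp (s * Real.log 3) = Real.exp (s * Real.log 3 / 2) ^ 2 := by
        rw [← Real.exp_nat_mul]; ring_nf
      rw [this]
      have h1 : 1 + s * Real.log 3 / 2 ≤ Real.exp (s * Real.log 3 / 2) := by
        have := Real.add_one_le_exp (s * Real.log 3 / 2); linarith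
      have hpos : 0 ≤ 1 + s * Real.log 3 / 2 := by nlinarith
      exact pow_le_pow_left₀ hpos h1 2
    have hL3' : (1.0931471803:ℝ) ≤ Real.log 3 := hL3
    have hL3u : Real.log 3 ≤ 2 * Real.log 2 := by
      have : Real.log 3 ≤ Real.log 4 := Real.log_le_log (by norm_num) (by norm_num)
      rw [hL4] at this; exact this
    -- chain
    rw [h4p, h3pp]
    have key : 4 * (1 + s * (2 * Real.log 2) + 3/4 * (s * (2 * Real.log 2))^2) ≤
        (3*p) * (1 + s * Real.log 3 / 2)^2 + 1 := by
      have hp3 : 3 * p = 3 * (1 + s) := by rw [hs]; ring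
      rw [hp3]
      exact key_poly s (Real.log 2) (Real.log 3) hs0 hs1 (by linarith) hL2a.le hL3
    calc 4 * Real.exp (s * (2 * Real.log 2))
        ≤ 4 * (1 + s * (2 * Real.log 2) + 3/4 * (s * (2 * Real.log 2))^2) := by linarith
      _ ≤ (3*p) * (1 + s * Real.log 3 / 2)^2 + 1 := key
      _ ≤ (3*p) * Real.exp (s * Real.log 3) + 1 := by
          have := mul_le_mul_of_nonneg_left hlb h3p0.le; linarith
      _ = (3*p) * (3:ℝ)^s + 1 := by rw [h3exp]
      _ ≤ (3*p) * (3*p)^s + 1 := by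
          have := mul_le_mul_of_nonneg_left h3s h3p0.le; linarith

/-- Key averaging estimate in the reduction of `L_p` TSP to Segmented TSP:
for `p ≥ 1`, `ε > 0` and a positive integer `k ≥ (3p)^p (1+ε)/ε²`, the average
`(1/k) ∑_{j=0}^{k−1} (1 + 3(1+ε)^{−j})^p` is at most `1 + ε`. -/
theorem segmented_tsp_averaging
    (p ε : ℝ) (hp : 1 ≤ p) (hε : 0 < ε) (k : ℕ) (hk : 0 < k)
    (hklarge : (3 * p) ^ p * (1 + ε) / ε ^ 2 ≤ (k : ℝ)) :
    (1 / (k : ℝ)) *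
        ∑ j ∈ Finset.range k, (1 + 3 * (1 + ε) ^ (-(j : ℝ))) ^ p ≤ 1 + ε := by
  have hε1 : (0:ℝ) < 1 + ε := by linarith
  set q : ℝ := (1 + ε)⁻¹ with hqdef
  have hq0 : 0 < q := by positivity
  have hq1 : q < 1 := by
    rw [hqdef]; exact inv_lt_one_of_one_lt₀ (by linarith)
  have hC0 : (0:ℝ) ≤ (3*p)^p := Real.rpow_nonneg (by linarith) p
  -- termwise bound
  have hterm : ∀ j ∈ Finset.range k,
      (1 + 3 * (1 + ε) ^ (-(j : ℝ))) ^ p ≤ 1 + (3*p)^p * q ^ j := by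
    intro j _
    have hrw : (1 + ε) ^ (-(j : ℝ)) = q ^ j := by
      rw [Real.rpow_neg hε1.le, Real.rpow_natCast, hqdef, inv_pow]
    rw [hrw]
    set t : ℝ := q ^ j with htdef
    have ht0 : 0 ≤ t := by positivity
    have ht1 : t ≤ 1 := pow_le_one₀ hq0.le hq1.le
    -- convexity: (1+3t)^p = ((1-t)*1 + t*4)^p ≤ (1-t)*1^p + t*4^p
    have hcvx := (convexOn_rpow hp).2 (Set.mem_Ici.2 (by norm_num : (0:ℝ) ≤ 1))
      (Set.mem_Ici.2 (by norm_num : (0:ℝ) ≤ 4)) (by linarith : (0:ℝ) ≤ 1 - t) ht0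
      (by ring : (1 - t) + t = 1)
    simp only [smul_eq_mul] at hcvx
    have heq : (1 - t) * 1 + t * 4 = 1 + 3 * t := by ring
    rw [heq, Real.one_rpow] at hcvx
    have h4 := four_rpow_le hp
    calc (1 + 3 * t) ^ p ≤ (1 - t) * 1 + t * (4:ℝ)^p := hcvx
      _ ≤ (1 - t) * 1 + t * ((3*p)^p + 1) := by nlinarith
      _ = 1 + (3*p)^p * t := by ring
  -- sum bound
  have hsum : ∑ j ∈ Finset.range k, (1 + 3 * (1 + ε) ^ (-(j : ℝ))) ^ p ≤
      (k : ℝ) + (3*p)^p * ((1 + ε) / ε) := by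
    calc ∑ j ∈ Finset.range k, (1 + 3 * (1 + ε) ^ (-(j : ℝ))) ^ p
        ≤ ∑ j ∈ Finset.range k, (1 + (3*p)^p * q ^ j) := Finset.sum_le_sum hterm
      _ = (k : ℝ) + (3*p)^p * ∑ j ∈ Finset.range k, q ^ j := by
          rw [Finset.sum_add_distrib, Finset.sum_const, Finset.card_range,
            ← Finset.mul_sum]; simp
      _ ≤ (k : ℝ) + (3*p)^p * ((1 + ε) / ε) := by
          have hgeo : ∑ j ∈ Finset.range k, q ^ j ≤ (1 - q)⁻¹ := by
            have := Summable.sum_le_tsum (Finset.range k)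
              (fun i _ => by positivity : ∀ i ∉ Finset.range k, (0:ℝ) ≤ q ^ i)
              (summable_geometric_of_lt_one hq0.le hq1)
            rwa [tsum_geometric_of_lt_one hq0.le hq1] at this
          have hinv : (1 - q)⁻¹ = (1 + ε) / ε := by
            rw [hqdef]; rw [show 1 - (1+ε)⁻¹ = ε / (1+ε) by field_simp; ring]
            rw [inv_div]
          rw [hinv] at hgeo
          have := mul_le_mul_of_nonneg_left hgeo hC0
          linarith
  -- final arithmetic
  have hk0 : (0:ℝ) < (k:ℝ) := by exact_mod_cast hk
  have hklarge' : (3*p)^p * (1 + ε) ≤ (k:ℝ) * ε^2 := by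
    rw [div_le_iff₀ (by positivity)] at hklarge; linarith
  have h1 : (3*p)^p * ((1 + ε) / ε) ≤ (k:ℝ) * ε := by
    rw [← mul_div_assoc, div_le_iff₀ hε]
    nlinarith [hklarge']
  calc (1/(k:ℝ)) * ∑ j ∈ Finset.range k, (1 + 3 * (1 + ε) ^ (-(j : ℝ))) ^ p
      ≤ (1/(k:ℝ)) * ((k : ℝ) + (3*p)^p * ((1 + ε) / ε)) :=
        mul_le_mul_of_nonneg_left hsum (by positivity)
    _ ≤ (1/(k:ℝ)) * ((1 + ε) * (k:ℝ)) := by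
        apply mul_le_mul_of_nonneg_left _ (by positivity)
        nlinarith [h1]
    _ = 1 + ε := by field_simp
end

section
/- Let c > 1 and p ≥ 1 be real numbers and let a ∈ [1, c]. Then c^p · ∫_0^{log a / log c} c^{p·u} du + ∫_{log a / log c}^1 c^{p·u} du = a^p · (c^p − 1) / (p · log c), where c^{p·u} denotes exp(p·u·log c) and log is the natural logarithm. -/
open intervalIntegral Real

lemma int_exp_mul (k t1 t2 : ℝ) (hk : k ≠ 0) :
    ∫ u in t1..t2, Real.exp (k * u) = (Real.exp (k * t2) - Real.exp (k * t1)) / k := by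
  have h := intervalIntegral.integral_comp_mul_left (a := t1) (b := t2)
    (fun x => Real.exp x) hk
  simp [integral_exp, smul_eq_mul] at h
  rw [h]
  field_simp

/-- Integral identity computing `E[b^p · c^{p·1[a ≥ b]}]` for `b = c^U`, `U`
uniform on `[0,1)`: for `c > 1`, `p ≥ 1` and `a ∈ [1, c]`,
`c^p ∫_0^{log_c a} c^{pu} du + ∫_{log_c a}^1 c^{pu} du
  = a^p (c^p − 1)/(p log c)`. -/
theorem expected_power_integral
    (c p a : ℝ) (hc : 1 < c) (hp : 1 ≤ p) (ha : a ∈ Set.Icc 1 c) :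
    c ^ p * (∫ u in (0 : ℝ)..(Real.log a / Real.log c),
        Real.exp (p * u * Real.log c)) +
      (∫ u in (Real.log a / Real.log c)..(1 : ℝ),
        Real.exp (p * u * Real.log c)) =
    a ^ p * (c ^ p - 1) / (p * Real.log c) := by
  have hlc : Real.log c ≠ 0 := ne_of_gt (Real.log_pos hc)
  have hp0 : p ≠ 0 := by positivity
  have hk : p * Real.log c ≠ 0 := mul_ne_zero hp0 hlc
  have ha0 : (0:ℝ) < a := lt_of_lt_of_le one_pos ha.1
  have hc0 : (0:ℝ) < c := lt_trans one_pos hc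
  have hrw : ∀ u : ℝ, p * u * Real.log c = (p * Real.log c) * u := fun u => by ring
  simp only [hrw]
  rw [int_exp_mul _ _ _ hk, int_exp_mul _ _ _ hk]
  have h1 : (p * Real.log c) * (Real.log a / Real.log c) = p * Real.log a := by
    field_simp
  rw [h1]
  have ha' : Real.exp (p * Real.log a) = a ^ p := by
    rw [Real.rpow_def_of_pos ha0]; ring_nf
  have hc' : Real.exp ((p * Real.log c) * 1) = c ^ p := by
    rw [Real.rpow_def_of_pos hc0]; ring_nf
  rw [ha', hc']
  field_simp
  rw [mul_zero, Real.exp_zero]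
  ring
end

section
/- Let b > 0, c > 1 and p ≥ 1 be real numbers, let j be a natural number, set S = ∑_{m=0}^{j} 2·b·c^m, and let u ∈ [0, 2·b·c^{j+1}]. Then (1/2)·(S + u)^p + (1/2)·(S + 2·b·c^{j+1} − u)^p ≤ 2^{p−1}·(c^p + 1)·(b·c^{j+1})^p / (c − 1)^p. -/
/-- Bound on the expected `p`-th power of a visit time when the covering cycle
in iteration `j+1` (of length at most `2bc^{j+1}`) is traversed in either
direction with probability `1/2`, after earlier subtours of total length
`S = ∑_{m=0}^{j} 2bc^m`. -/
theorem cycle_traversal_power_bound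
    (b c p : ℝ) (hb : 0 < b) (hc : 1 < c) (hp : 1 ≤ p) (j : ℕ)
    (S : ℝ) (hS : S = ∑ m ∈ Finset.range (j + 1), 2 * b * c ^ m)
    (u : ℝ) (hu : u ∈ Set.Icc 0 (2 * b * c ^ (j + 1))) :
    (1 / 2) * (S + u) ^ p + (1 / 2) * (S + 2 * b * c ^ (j + 1) - u) ^ p ≤
      2 ^ (p - 1) * (c ^ p + 1) * (b * c ^ (j + 1)) ^ p / (c - 1) ^ p := by
  obtain ⟨hu0, huL⟩ := hu
  set L : ℝ := 2 * b * c ^ (j + 1) with hL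
  have hc0 : (0:ℝ) < c := lt_trans one_pos hc
  have hL0 : 0 < L := by positivity
  have hcm1 : 0 < c - 1 := sub_pos.2 hc
  have hS0 : 0 ≤ S := by
    rw [hS]; exact Finset.sum_nonneg fun m _ => by positivity
  have hS1 : S ≤ L / (c - 1) := by
    rw [hS, ← Finset.mul_sum, geom_sum_eq hc.ne', hL, mul_div_assoc]
    gcongr
    linarith
  have hS2 : S + L ≤ L * c / (c - 1) := by
    have : L / (c - 1) + L = L * c / (c - 1) := by field_simp; ring
    linarith
  -- convexity step
  set a : ℝ := 1 - u / L with ha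
  set t : ℝ := u / L with ht
  have ht0 : 0 ≤ t := by positivity
  have ht1 : t ≤ 1 := by rw [ht, div_le_one hL0]; exact huL
  have ha0 : 0 ≤ a := by simp [ha]; linarith
  have hab : a + t = 1 := by ring
  have hconv := convexOn_rpow hp
  have hmem1 : S ∈ Set.Ici (0:ℝ) := hS0
  have hmem2 : S + L ∈ Set.Ici (0:ℝ) := by simp; linarith
  have h1 : (S + u) ^ p ≤ a * S ^ p + t * (S + L) ^ p := by
    have := hconv.2 hmem1 hmem2 ha0 ht0 hab
    simp only [smul_eq_mul] at this
    have he : a * S + t * (S + L) = S + u := by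
      rw [ha, ht]; linear_combination (div_mul_cancel₀ u hL0.ne')
    rwa [he] at this
  have h2 : (S + L - u) ^ p ≤ t * S ^ p + a * (S + L) ^ p := by
    have := hconv.2 hmem1 hmem2 ht0 ha0 (by linarith)
    simp only [smul_eq_mul] at this
    have he : t * S + a * (S + L) = S + L - u := by
      rw [ha, ht]; linear_combination -(div_mul_cancel₀ u hL0.ne')
    rwa [he] at this
  have hmid : (1/2) * (S + u) ^ p + (1/2) * (S + L - u) ^ p
      ≤ (1/2) * S ^ p + (1/2) * (S + L) ^ p := by
    have h := add_le_add h1 h2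
    have he : a * S ^ p + t * (S + L) ^ p + (t * S ^ p + a * (S + L) ^ p)
        = (a + t) * (S ^ p + (S + L) ^ p) := by ring
    rw [he, hab, one_mul] at h
    linarith
  -- monotonicity step
  have hp0 : 0 ≤ p := le_trans zero_le_one hp
  have h3 : S ^ p ≤ (L / (c - 1)) ^ p := Real.rpow_le_rpow hS0 hS1 hp0
  have h4 : (S + L) ^ p ≤ (L * c / (c - 1)) ^ p :=
    Real.rpow_le_rpow (by linarith) hS2 hp0
  -- final arithmetic
  have hA : (L / (c - 1)) ^ p = 2 ^ p * (b * c ^ (j + 1)) ^ p / (c - 1) ^ p := by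
    rw [hL, Real.div_rpow (by positivity) hcm1.le, show (2:ℝ) * b * c ^ (j+1) = 2 * (b * c ^ (j+1)) by ring,
      Real.mul_rpow (by norm_num) (by positivity)]
  have hB : (L * c / (c - 1)) ^ p = 2 ^ p * c ^ p * (b * c ^ (j + 1)) ^ p / (c - 1) ^ p := by
    rw [hL, Real.div_rpow (by positivity) hcm1.le, show (2:ℝ) * b * c ^ (j+1) * c = 2 * (b * c ^ (j+1)) * c by ring,
      Real.mul_rpow (by positivity) hc0.le,
      Real.mul_rpow (by norm_num) (by positivity)]
    ring
  have h2p : (2:ℝ) ^ (p - 1) = 2 ^ p / 2 := by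
    rw [Real.rpow_sub (by norm_num), Real.rpow_one]
  calc (1 / 2) * (S + u) ^ p + (1 / 2) * (S + L - u) ^ p
      ≤ (1/2) * S ^ p + (1/2) * (S + L) ^ p := hmid
    _ ≤ (1/2) * (L / (c - 1)) ^ p + (1/2) * (L * c / (c - 1)) ^ p := by linarith
    _ = 2 ^ (p - 1) * (c ^ p + 1) * (b * c ^ (j + 1)) ^ p / (c - 1) ^ p := by
        rw [hA, hB, h2p]; ring
end

section
/- Let η ≥ 1 be a real number, let K be a positive integer, and let y₁, …, y_K ∈ [0, 1] with ∑_{i=1}^K y_i ≤ 1. Then ∏_{i=1}^K (1 − y_i/η) ≤ e^{−1/η} + (1 − e^{−1/η})·(1 − ∑_{i=1}^K y_i). -/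
/-- Probability estimate for the multi-vehicle LP-rounding algorithm: if
`η ≥ 1` and `y₁, …, y_K ∈ [0, 1]` with `∑ y_i ≤ 1`, then
`∏ (1 − y_i/η) ≤ e^{−1/η} + (1 − e^{−1/η})(1 − ∑ y_i)`. -/
theorem multi_vehicle_probability_bound
    (η : ℝ) (hη : 1 ≤ η) (K : ℕ) (hK : 0 < K)
    (y : Fin K → ℝ) (hy : ∀ i, y i ∈ Set.Icc (0 : ℝ) 1)
    (hsum : ∑ i, y i ≤ 1) :
    ∏ i, (1 - y i / η) ≤
      Real.exp (-1 / η) + (1 - Real.exp (-1 / η)) * (1 - ∑ i, y i) := by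
  have hηpos : (0 : ℝ) < η := lt_of_lt_of_le one_pos hη
  set s := ∑ i, y i with hs
  have hs0 : 0 ≤ s := Finset.sum_nonneg fun i _ => (hy i).1
  -- Step 1: product ≤ exp (-s/η)
  have h1 : ∏ i, (1 - y i / η) ≤ Real.exp (-s / η) := by
    have : ∏ i, (1 - y i / η) ≤ ∏ i, Real.exp (-(y i / η)) := by
      apply Finset.prod_le_prod
      · intro i _
        have h1 : y i ≤ 1 := (hy i).2
        have : y i / η ≤ 1 := by
          rw [div_le_one hηpos]; linarith
        linarith
      · intro i _
        have := Real.add_one_le_exp (-(y i / η))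
        linarith
    calc ∏ i, (1 - y i / η) ≤ ∏ i, Real.exp (-(y i / η)) := this
      _ = Real.exp (∑ i, -(y i / η)) := (Real.exp_sum _ _).symm
      _ = Real.exp (-s / η) := by
          congr 1
          rw [hs, neg_div, Finset.sum_div]; simp
  -- Step 2: convexity chord bound: exp(-s/η) ≤ (1-s) * 1 + s * exp(-1/η)
  have h2 : Real.exp (-s / η) ≤ (1 - s) * Real.exp 0 + s * Real.exp (-1 / η) := by
    have := convexOn_exp.2 (Set.mem_univ (0 : ℝ)) (Set.mem_univ (-1 / η))
      (by linarith : (0:ℝ) ≤ 1 - s) hs0 (by ring)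
    simpa [smul_eq_mul, mul_comm, mul_div_assoc, neg_div, div_eq_mul_inv] using this
  have h2' : Real.exp (-s / η) ≤ (1 - s) + s * Real.exp (-1 / η) := by
    simpa [Real.exp_zero] using h2
  calc ∏ i, (1 - y i / η) ≤ Real.exp (-s / η) := h1
    _ ≤ (1 - s) + s * Real.exp (-1 / η) := h2'
    _ = Real.exp (-1 / η) + (1 - Real.exp (-1 / η)) * (1 - s) := by ring
end

section
/- For every real number p ≥ 1, there exists a real number c with 1 < c and c^p < e such that (e − 1)·2^{p−1}·(c^{2p} − 1) / (p·(c − 1)^p·(e − c^p)·log c) < (18·p)^p, where log is the natural logarithm and e is Euler's number. -/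
/-- For every `p ≥ 1` there is a `c > 1` with `c^p < e` for which the bound
`(e − 1)2^{p−1}(c^{2p} − 1)/(p(c − 1)^p(e − c^p) log c)` on
`E[‖ℓ^R‖_p^p]/‖ℓ^OPT‖_p^p` in the LP-rounding analysis of multi-vehicle
`L_p` TSP is strictly below `(18p)^p`. -/
theorem multi_lp_tsp_constant_exists (p : ℝ) (hp : 1 ≤ p) :
    ∃ c : ℝ, 1 < c ∧ c ^ p < Real.exp 1 ∧
      (Real.exp 1 - 1) * 2 ^ (p - 1) * (c ^ (2 * p) - 1) /
          (p * (c - 1) ^ p * (Real.exp 1 - c ^ p) * Real.log c) <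
        (18 * p) ^ p := by
  have hp0 : 0 < p := lt_of_lt_of_le one_pos hp
  have hpne : p ≠ 0 := ne_of_gt hp0
  have he : (2.7182818283 : ℝ) < Real.exp 1 := Real.exp_one_gt_d9
  set L := Real.log (5/4) with hLdef
  have hL5 : (1/5 : ℝ) ≤ L := by
    have h := Real.log_le_sub_one_of_pos (show (0:ℝ) < 4/5 by norm_num)
    have h2 : Real.log (4/5) = -L := by
      rw [hLdef, ← Real.log_inv]; norm_num
    rw [h2] at h; linarith
  have hLpos : 0 < L := lt_of_lt_of_le (by norm_num) hL5
  refine ⟨(5/4 : ℝ) ^ (p⁻¹ : ℝ), ?_, ?_, ?_⟩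
  · calc (1:ℝ) = 1 ^ (p⁻¹ : ℝ) := (Real.one_rpow _).symm
      _ < (5/4 : ℝ) ^ (p⁻¹ : ℝ) := by
        apply Real.rpow_lt_rpow (by norm_num) (by norm_num) (by positivity)
  · have hcp : ((5/4:ℝ) ^ (p⁻¹:ℝ)) ^ p = 5/4 := by
      rw [← Real.rpow_mul (by norm_num), inv_mul_cancel₀ hpne, Real.rpow_one]
    rw [hcp]; linarith
  · have hcp : ((5/4:ℝ) ^ (p⁻¹:ℝ)) ^ p = 5/4 := by
      rw [← Real.rpow_mul (by norm_num), inv_mul_cancel₀ hpne, Real.rpow_one]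
    have hc2p : ((5/4:ℝ) ^ (p⁻¹:ℝ)) ^ (2*p) = 25/16 := by
      rw [← Real.rpow_mul (by norm_num)]
      have h : p⁻¹ * (2*p) = 2 := by field_simp
      rw [h, show (2:ℝ) = ((2:ℕ):ℝ) by norm_num, Real.rpow_natCast]
      norm_num
    have hlogc : Real.log ((5/4:ℝ) ^ (p⁻¹:ℝ)) = p⁻¹ * L := by
      rw [Real.log_rpow (by norm_num)]
    have hexp : (5/4:ℝ) ^ (p⁻¹:ℝ) = Real.exp (p⁻¹ * L) := by
      rw [Real.rpow_def_of_pos (by norm_num), mul_comm]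
    have hcm1 : L / p ≤ (5/4:ℝ) ^ (p⁻¹:ℝ) - 1 := by
      have h := Real.add_one_le_exp (p⁻¹ * L)
      rw [← hexp] at h
      have : p⁻¹ * L = L / p := by field_simp
      linarith [this ▸ h]
    have hLp : 0 < L / p := by positivity
    have hA : (L/p) ^ p ≤ ((5/4:ℝ) ^ (p⁻¹:ℝ) - 1) ^ p :=
      Real.rpow_le_rpow (le_of_lt hLp) hcm1 (le_of_lt hp0)
    have hApos : 0 < ((5/4:ℝ) ^ (p⁻¹:ℝ) - 1) ^ p :=
      lt_of_lt_of_le (Real.rpow_pos_of_pos hLp p) hA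
    rw [hcp, hc2p, hlogc]
    set A := ((5/4:ℝ) ^ (p⁻¹:ℝ) - 1) ^ p with hAdef
    set e := Real.exp 1 with hedef
    have he54 : (5/4:ℝ) < e := by linarith
    have hden : p * A * (e - 5/4) * (p⁻¹ * L) = A * (e - 5/4) * L := by
      field_simp
    rw [hden, div_lt_iff₀ (mul_pos (mul_pos hApos (by linarith : (0:ℝ) < e - 5/4)) hLpos)]
    -- key algebraic identities
    have h2p : (0:ℝ) < (2:ℝ) ^ p := Real.rpow_pos_of_pos two_pos p
    have h2pm1 : (2:ℝ) ^ (p-1) = 2 ^ p / 2 := by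
      rw [Real.rpow_sub two_pos, Real.rpow_one]
    have hmul : (18*p) ^ p * (L/p) ^ p = 2 ^ p * (9*L) ^ p := by
      rw [← Real.mul_rpow (by positivity) (le_of_lt hLp),
          ← Real.mul_rpow (by norm_num) (by positivity)]
      congr 1
      field_simp; ring
    have h9L : 9*L ≤ (9*L) ^ p := by
      calc 9*L = (9*L) ^ (1:ℝ) := (Real.rpow_one _).symm
        _ ≤ (9*L) ^ p := Real.rpow_le_rpow_of_exponent_le (by linarith) hp
    -- main numeric inequality
    have hkey : (e - 1) * (2 ^ p / 2) * (25/16 - 1) <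
        (2 ^ p * (9*L) ^ p) * (e - 5/4) * L := by
      have hq : (e - 1) * (1/2) * (25/16 - 1) < (9*L) * (e - 5/4) * L := by
        nlinarith [mul_nonneg (sub_nonneg.2 hL5) (sub_nonneg.2 hL5)]
      calc (e - 1) * (2 ^ p / 2) * (25/16 - 1)
          = 2 ^ p * ((e - 1) * (1/2) * (25/16 - 1)) := by ring
        _ < 2 ^ p * ((9*L) * (e - 5/4) * L) := by
            exact mul_lt_mul_of_pos_left hq h2p
        _ ≤ (2 ^ p * (9*L) ^ p) * (e - 5/4) * L := by
            have h1 : 2 ^ p * (9*L) ≤ 2 ^ p * (9*L) ^ p :=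
              mul_le_mul_of_nonneg_left h9L h2p.le
            have h2 : (0:ℝ) ≤ (e - 5/4) * L := le_of_lt (mul_pos (by linarith) hLpos)
            nlinarith [mul_le_mul_of_nonneg_right h1 h2]
    calc (e - 1) * 2 ^ (p-1) * (25/16 - 1)
        = (e - 1) * (2 ^ p / 2) * (25/16 - 1) := by rw [h2pm1]
      _ < (2 ^ p * (9*L) ^ p) * (e - 5/4) * L := hkey
      _ = ((18*p) ^ p * (L/p) ^ p) * (e - 5/4) * L := by rw [hmul]
      _ ≤ (18*p) ^ p * A * (e - 5/4) * L := by
          have hx : (0:ℝ) ≤ (18*p) ^ p := le_of_lt (Real.rpow_pos_of_pos (by linarith) p)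
          exact mul_le_mul_of_nonneg_right (mul_le_mul_of_nonneg_right
            (mul_le_mul_of_nonneg_left hA hx) (by linarith)) (le_of_lt hLpos)
      _ = (18*p) ^ p * (A * (e - 5/4) * L) := by ring
end
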